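/- Let f : {0,1}ⁿ → ℝ satisfy condition (2.1) with constant v > 0, and for each positive integer k set a_k = Q_{1−2^{−k}}. Then for every integer m ≥ 1, a_m ≤ a_1 + 8·sqrt( v·(m−1) ). -/

import Mathlib

open scoped Classical
open Finset

/-- Probability of an event under the uniform distribution on `{0,1}ⁿ`. -/
noncomputable def prb {n : ℕ} (P : (Fin n → Fin 2) → Prop) : ℝ :=
  ((Finset.univ.filter P).card : ℝ) / 2 ^ n

/-- `x^{(i)}`: flip the `i`-th bit of `x`. -/
noncomputable def flipBit {n : ℕ} (x : Fin n → Fin 2) (i : Fin n) : Fin n → Fin 2 :=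
  Function.update x i (x i + 1)

/-- The `α`-quantile `Q_α = inf { z : P{f(X) ≤ z} ≥ α }`. -/
noncomputable def quant {n : ℕ} (f : (Fin n → Fin 2) → ℝ) (α : ℝ) : ℝ :=
  sInf {z : ℝ | α ≤ prb fun x => f x ≤ z}

/-- Expectation of `f(X)` for `X` uniform on `{0,1}ⁿ`. -/
noncomputable def expecb {n : ℕ} (f : (Fin n → Fin 2) → ℝ) : ℝ :=
  (∑ x, f x) / 2 ^ n

/-- Variance of `f(X)` for `X` uniform on `{0,1}ⁿ`. -/
noncomputable def varb {n : ℕ} (f : (Fin n → Fin 2) → ℝ) : ℝ :=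
  expecb fun x => (f x - expecb f) ^ 2

/-- two-point entropy -/
noncomputable def ent2 (p q : ℝ) : ℝ :=
  (p * Real.log p + q * Real.log q) / 2 - ((p + q) / 2) * Real.log ((p + q) / 2)

lemma ent2_symm (p q : ℝ) : ent2 p q = ent2 q p := by
  unfold ent2; rw [add_comm q p, add_comm (q * Real.log q) _]

lemma expecb_pos {n : ℕ} {h : (Fin n → Fin 2) → ℝ} (H : ∀ x, 0 < h x) : 0 < expecb h := by
  unfold expecb
  apply div_pos _ (by positivity)
  exact Finset.sum_pos (fun x _ => H x) Finset.univ_nonempty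

lemma expecb_mono {n : ℕ} {g h : (Fin n → Fin 2) → ℝ} (H : ∀ x, g x ≤ h x) :
    expecb g ≤ expecb h := by
  unfold expecb
  gcongr with x
  · exact H x


/-- log-sum / duality inequality on two points -/
lemma dual_le_ent2 {p q A B : ℝ} (hp : 0 < p) (hq : 0 < q) (hA : 0 < A) (hB : 0 < B) :
    (p * Real.log (2 * A / (A + B)) + q * Real.log (2 * B / (A + B))) / 2 ≤ ent2 p q := by
  set s : ℝ := (p + q) / 2 with hs
  have hspos : 0 < s := by positivity
  have hAB : 0 < A + B := by positivity
  set g1 : ℝ := 2 * A / (A + B) with hg1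
  set g2 : ℝ := 2 * B / (A + B) with hg2
  have hg1p : 0 < g1 := by positivity
  have hg2p : 0 < g2 := by positivity
  have key : ∀ r g : ℝ, 0 < r → 0 < g →
      r * Real.log g ≤ s * g - r + r * Real.log r - r * Real.log s := by
    intro r g hr hg
    have h1 : Real.log (s * g / r) ≤ s * g / r - 1 := Real.log_le_sub_one_of_pos (by positivity)
    have h2 : Real.log (s * g / r) = Real.log s + Real.log g - Real.log r := by
      rw [Real.log_div (by positivity) (ne_of_gt hr), Real.log_mul (ne_of_gt hspos) (ne_of_gt hg)]
    rw [h2] at h1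
    have h3 := mul_le_mul_of_nonneg_left h1 hr.le
    have h4 : r * (s * g / r - 1) = s * g - r := by field_simp
    rw [h4] at h3
    nlinarith
  have k1 := key p g1 hp hg1p
  have k2 := key q g2 hq hg2p
  have hsum : s * g1 + s * g2 = p + q := by
    rw [hg1, hg2, hs]; field_simp
  have k := add_le_add k1 k2
  have hls : p * Real.log s + q * Real.log s = 2 * (s * Real.log s) := by rw [hs]; ring
  unfold ent2
  rw [← hs]
  linarith [k, hsum, hls]

lemma expecb_add {n : ℕ} (g h : (Fin n → Fin 2) → ℝ) :
    expecb (fun x => g x + h x) = expecb g + expecb h := by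
  unfold expecb
  rw [Finset.sum_add_distrib, add_div]

lemma expecb_mul_const {n : ℕ} (g : (Fin n → Fin 2) → ℝ) (c : ℝ) :
    expecb (fun x => g x * c) = expecb g * c := by
  unfold expecb
  rw [← Finset.sum_mul, div_mul_eq_mul_div]

/-- Jensen for ent2 -/
lemma ent2_expecb_le {n : ℕ} (h₀ h₁ : (Fin n → Fin 2) → ℝ)
    (H0 : ∀ y, 0 < h₀ y) (H1 : ∀ y, 0 < h₁ y) :
    ent2 (expecb h₀) (expecb h₁) ≤ expecb fun y => ent2 (h₀ y) (h₁ y) := by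
  set A := expecb h₀ with hA
  set B := expecb h₁ with hB
  have hApos : 0 < A := expecb_pos H0
  have hBpos : 0 < B := expecb_pos H1
  have hABpos : 0 < A + B := by positivity
  set g1 : ℝ := Real.log (2 * A / (A + B)) with hg1
  set g2 : ℝ := Real.log (2 * B / (A + B)) with hg2
  have step1 : ent2 A B = (A * g1 + B * g2) / 2 := by
    have e1 : g1 = Real.log 2 + Real.log A - Real.log (A + B) := by
      rw [hg1, Real.log_div (by positivity) (ne_of_gt hABpos),
        Real.log_mul (by norm_num) (ne_of_gt hApos)]
    have e2 : g2 = Real.log 2 + Real.log B - Real.log (A + B) := by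
      rw [hg2, Real.log_div (by positivity) (ne_of_gt hABpos),
        Real.log_mul (by norm_num) (ne_of_gt hBpos)]
    have e3 : Real.log ((A + B) / 2) = Real.log (A + B) - Real.log 2 :=
      Real.log_div (ne_of_gt hABpos) (by norm_num)
    unfold ent2
    rw [e1, e2, e3]; ring
  have step2 : (A * g1 + B * g2) / 2 = expecb fun y => (h₀ y * g1 + h₁ y * g2) / 2 := by
    have : (fun y => (h₀ y * g1 + h₁ y * g2) / 2)
        = fun y => (h₀ y * (g1 / 2) + h₁ y * (g2 / 2)) := by funext y; ring
    rw [this, expecb_add, expecb_mul_const, expecb_mul_const, ← hA, ← hB]; ring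
  rw [step1, step2]
  apply expecb_mono
  intro y
  exact dual_le_ent2 (H0 y) (H1 y) hApos hBpos

/-- two-point entropy bound for exponentials, ordered case -/
lemma ent2_exp_le {u w : ℝ} (hw : w ≤ u) :
    ent2 (Real.exp u) (Real.exp w) ≤ (u - w) ^ 2 * Real.exp u / 4 := by
  have h1 : Real.exp ((u + w) / 2) ≤ (Real.exp u + Real.exp w) / 2 := by
    have := sq_nonneg (Real.exp (u / 2) - Real.exp (w / 2))
    have e1 : Real.exp ((u + w) / 2) = Real.exp (u / 2) * Real.exp (w / 2) := by
      rw [← Real.exp_add]; ring_nf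
    have e2 : Real.exp u = Real.exp (u / 2) ^ 2 := by
      rw [← Real.exp_nat_mul]; congr 1; push_cast; ring
    have e3 : Real.exp w = Real.exp (w / 2) ^ 2 := by
      rw [← Real.exp_nat_mul]; congr 1; push_cast; ring
    nlinarith
  have hlog : (u + w) / 2 ≤ Real.log ((Real.exp u + Real.exp w) / 2) := by
    rw [← Real.log_exp ((u + w) / 2)]
    exact Real.log_le_log (Real.exp_pos _) h1
  have h2 : Real.exp u - Real.exp w ≤ (u - w) * Real.exp u := by
    have hd : 0 ≤ u - w := by linarith
    have : Real.exp w ≥ Real.exp u * (1 - (u - w)) := by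
      have := Real.add_one_le_exp (w - u)
      have h3 : Real.exp w = Real.exp u * Real.exp (w - u) := by
        rw [← Real.exp_add]; ring_nf
      nlinarith [Real.exp_pos u]
    nlinarith [Real.exp_pos u]
  unfold ent2
  rw [Real.log_exp, Real.log_exp]
  have hE : 0 < Real.exp u + Real.exp w := by positivity
  nlinarith [hlog, h2, Real.exp_pos u, Real.exp_pos w,
    mul_le_mul_of_nonneg_left hlog (le_of_lt (by positivity : (0:ℝ) < (Real.exp u + Real.exp w) / 2)),
    sq_nonneg (u - w)]

theorem ent_le_sum : ∀ {n : ℕ} (h : (Fin n → Fin 2) → ℝ), (∀ x, 0 < h x) →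
    expecb (fun x => h x * Real.log (h x)) - expecb h * Real.log (expecb h)
      ≤ expecb fun x => ∑ i, ent2 (h x) (h (flipBit x i)) := by
  intro n
  induction n with
  | zero =>
    intro h hpos
    have key : ∀ g : (Fin 0 → Fin 2) → ℝ, expecb g = g default := by
      intro g
      have huniv : (Finset.univ : Finset (Fin 0 → Fin 2)) = {default} := by
        apply Finset.eq_singleton_iff_unique_mem.mpr
        exact ⟨Finset.mem_univ _, fun x _ => Subsingleton.elim x default⟩
      rw [expecb, huniv, Finset.sum_singleton]
      norm_num
    rw [key, key, key]
    simp
  | succ n IH =>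
    intro h hpos
    have sum_split : ∀ F : (Fin (n + 1) → Fin 2) → ℝ,
        ∑ x, F x = (∑ y, F (Fin.cons 0 y)) + ∑ y, F (Fin.cons 1 y) := by
      intro F
      rw [← Equiv.sum_comp (Fin.consEquiv fun _ => Fin 2) F, Fintype.sum_prod_type,
        Fin.sum_univ_two]
      rfl
    have expecb_split : ∀ F : (Fin (n + 1) → Fin 2) → ℝ,
        expecb F = (expecb (fun y => F (Fin.cons 0 y)) + expecb (fun y => F (Fin.cons 1 y))) / 2 := by
      intro F
      unfold expecb
      rw [sum_split F, pow_succ]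
      field_simp
    have flip0 : ∀ (b : Fin 2) (y : Fin n → Fin 2),
        flipBit (Fin.cons b y) 0 = Fin.cons (b + 1) y := by
      intro b y
      unfold flipBit
      rw [Fin.cons_zero, Fin.update_cons_zero]
    have flipS : ∀ (b : Fin 2) (y : Fin n → Fin 2) (i : Fin n),
        flipBit (Fin.cons b y) i.succ = Fin.cons b (flipBit y i) := by
      intro b y i
      unfold flipBit
      rw [Fin.cons_succ, ← Fin.cons_update]
    have e0 : (fun y => ∑ i, ent2 (h (Fin.cons 0 y)) (h (flipBit (Fin.cons 0 y) i)))
        = fun y => ent2 (h (Fin.cons 0 y)) (h (Fin.cons 1 y))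
            + ∑ i, ent2 (h (Fin.cons 0 y)) (h (Fin.cons 0 (flipBit y i))) := by
      funext y
      rw [Fin.sum_univ_succ, flip0]
      have h01 : (0 : Fin 2) + 1 = 1 := rfl
      rw [h01]
      congr 1
      refine Finset.sum_congr rfl fun i _ => ?_
      rw [flipS]
    have e1 : (fun y => ∑ i, ent2 (h (Fin.cons 1 y)) (h (flipBit (Fin.cons 1 y) i)))
        = fun y => ent2 (h (Fin.cons 0 y)) (h (Fin.cons 1 y))
            + ∑ i, ent2 (h (Fin.cons 1 y)) (h (Fin.cons 1 (flipBit y i))) := by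
      funext y
      rw [Fin.sum_univ_succ, flip0]
      have h11 : (1 : Fin 2) + 1 = 0 := rfl
      rw [h11, ent2_symm]
      congr 1
      refine Finset.sum_congr rfl fun i _ => ?_
      rw [flipS]
    have IH0 := IH (fun y => h (Fin.cons 0 y)) (fun y => hpos _)
    have IH1 := IH (fun y => h (Fin.cons 1 y)) (fun y => hpos _)
    have jens := ent2_expecb_le (fun y => h (Fin.cons 0 y)) (fun y => h (Fin.cons 1 y))
      (fun y => hpos _) (fun y => hpos _)
    have L1 := expecb_split (fun x => h x * Real.log (h x))
    have L2 := expecb_split h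
    have R1 := expecb_split (fun x => ∑ i, ent2 (h x) (h (flipBit x i)))
    rw [L1, L2, R1]
    beta_reduce
    rw [e0, e1, expecb_add, expecb_add]
    have hent : ent2 (expecb fun y => h (Fin.cons 0 y)) (expecb fun y => h (Fin.cons 1 y))
        = ((expecb fun y => h (Fin.cons 0 y)) * Real.log (expecb fun y => h (Fin.cons 0 y))
            + (expecb fun y => h (Fin.cons 1 y)) * Real.log (expecb fun y => h (Fin.cons 1 y))) / 2
          - (((expecb fun y => h (Fin.cons 0 y)) + (expecb fun y => h (Fin.cons 1 y))) / 2)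
              * Real.log (((expecb fun y => h (Fin.cons 0 y)) + (expecb fun y => h (Fin.cons 1 y))) / 2) := rfl
    rw [hent] at jens
    linarith [IH0, IH1, jens]

lemma expecb_const_mul {n : ℕ} (g : (Fin n → Fin 2) → ℝ) (c : ℝ) :
    expecb (fun x => c * g x) = c * expecb g := by
  unfold expecb
  rw [← Finset.mul_sum, mul_div_assoc]

lemma expecb_one {n : ℕ} : expecb (fun _ : Fin n → Fin 2 => (1:ℝ)) = 1 := by
  unfold expecb
  rw [Finset.sum_const, Finset.card_univ]
  simp

lemma flip_invol {n : ℕ} (x : Fin n → Fin 2) (i : Fin n) : flipBit (flipBit x i) i = x := by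
  unfold flipBit
  have h2 : ∀ b : Fin 2, b + 1 + 1 = b := by decide
  rw [Function.update_self, Function.update_idem, h2, Function.update_eq_self]

lemma sumFlipBit {n : ℕ} (g : (Fin n → Fin 2) → Fin n → ℝ) :
    ∑ x : Fin n → Fin 2, ∑ i, g (flipBit x i) i = ∑ x, ∑ i, g x i := by
  rw [Finset.sum_comm]
  conv_rhs => rw [Finset.sum_comm]
  refine Finset.sum_congr rfl fun i _ => ?_
  exact Fintype.sum_bijective (fun x => flipBit x i)
    (Function.Involutive.bijective fun x => flip_invol x i) _ _ (fun x => rfl)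

lemma ent2_exp_le' (u w : ℝ) :
    ent2 (Real.exp u) (Real.exp w)
      ≤ (max (u - w) 0) ^ 2 * Real.exp u / 4 + (max (w - u) 0) ^ 2 * Real.exp w / 4 := by
  rcases le_total w u with hc | hc
  · have h1 := ent2_exp_le hc
    have e1 : max (u - w) 0 = u - w := max_eq_left (by linarith)
    have e2 : max (w - u) 0 = 0 := max_eq_right (by linarith)
    rw [e1, e2]
    nlinarith [Real.exp_pos w]
  · have h1 := ent2_exp_le hc
    have e1 : max (w - u) 0 = w - u := max_eq_left (by linarith)
    have e2 : max (u - w) 0 = 0 := max_eq_right (by linarith)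
    rw [e1, e2, ent2_symm]
    nlinarith [Real.exp_pos u]

/-- modified log-Sobolev consequence: entropy bound for exp(l f) -/
lemma ent_exp_le {n : ℕ} (f : (Fin n → Fin 2) → ℝ) (v : ℝ)
    (hcond : ∀ x, ∑ i, (max (f x - f (flipBit x i)) 0) ^ 2 ≤ v)
    (l : ℝ) (hl : 0 ≤ l) :
    expecb (fun x => Real.exp (l * f x) * Real.log (Real.exp (l * f x)))
      - expecb (fun x => Real.exp (l * f x)) * Real.log (expecb (fun x => Real.exp (l * f x)))
      ≤ (l ^ 2 * v / 2) * expecb (fun x => Real.exp (l * f x)) := by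
  have step1 := ent_le_sum (fun x => Real.exp (l * f x)) (fun x => Real.exp_pos _)
  have step2 : expecb (fun x => ∑ i, ent2 (Real.exp (l * f x)) (Real.exp (l * f (flipBit x i))))
      ≤ expecb (fun x => ∑ i,
          ((max (l * f x - l * f (flipBit x i)) 0) ^ 2 * Real.exp (l * f x) / 4
            + (max (l * f (flipBit x i) - l * f x) 0) ^ 2 * Real.exp (l * f (flipBit x i)) / 4)) := by
    apply expecb_mono
    intro x
    exact Finset.sum_le_sum fun i _ => ent2_exp_le' _ _
  -- resum the second part
  have step3 : expecb (fun x => ∑ i,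
        ((max (l * f x - l * f (flipBit x i)) 0) ^ 2 * Real.exp (l * f x) / 4
          + (max (l * f (flipBit x i) - l * f x) 0) ^ 2 * Real.exp (l * f (flipBit x i)) / 4))
      = 2 * expecb (fun x => ∑ i,
          (max (l * f x - l * f (flipBit x i)) 0) ^ 2 * Real.exp (l * f x) / 4) := by
    unfold expecb
    rw [← mul_div_assoc]
    congr 1
    beta_reduce
    rw [Finset.sum_congr rfl fun (x : Fin n → Fin 2) _ =>
      (Finset.sum_add_distrib (s := Finset.univ)
        (f := fun i => (max (l * f x - l * f (flipBit x i)) 0) ^ 2 * Real.exp (l * f x) / 4)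
        (g := fun i => (max (l * f (flipBit x i) - l * f x) 0) ^ 2 * Real.exp (l * f (flipBit x i)) / 4)),
      Finset.sum_add_distrib]
    have resum : ∑ x : Fin n → Fin 2, ∑ i, (max (l * f (flipBit x i) - l * f x) 0) ^ 2
          * Real.exp (l * f (flipBit x i)) / 4
        = ∑ x : Fin n → Fin 2, ∑ i, (max (l * f x - l * f (flipBit x i)) 0) ^ 2
          * Real.exp (l * f x) / 4 := by
      have := sumFlipBit (n := n) (fun y i => (max (l * f y - l * f (flipBit y i)) 0) ^ 2
          * Real.exp (l * f y) / 4)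
      calc ∑ x : Fin n → Fin 2, ∑ i, (max (l * f (flipBit x i) - l * f x) 0) ^ 2
            * Real.exp (l * f (flipBit x i)) / 4
          = ∑ x : Fin n → Fin 2, ∑ i, (max (l * f (flipBit x i) - l * f (flipBit (flipBit x i) i)) 0) ^ 2
            * Real.exp (l * f (flipBit x i)) / 4 := by
            refine Finset.sum_congr rfl fun x _ => Finset.sum_congr rfl fun i _ => ?_
            rw [flip_invol]
        _ = ∑ x : Fin n → Fin 2, ∑ i, (max (l * f x - l * f (flipBit x i)) 0) ^ 2
            * Real.exp (l * f x) / 4 := this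
    rw [resum]
    ring
  -- pointwise bound by v
  have step4 : expecb (fun x => ∑ i,
        (max (l * f x - l * f (flipBit x i)) 0) ^ 2 * Real.exp (l * f x) / 4)
      ≤ expecb (fun x => (l ^ 2 * v / 4) * Real.exp (l * f x)) := by
    apply expecb_mono
    intro x
    have key : ∀ i : Fin n, (max (l * f x - l * f (flipBit x i)) 0) ^ 2
        = l ^ 2 * (max (f x - f (flipBit x i)) 0) ^ 2 := by
      intro i
      have : max (l * f x - l * f (flipBit x i)) 0 = l * max (f x - f (flipBit x i)) 0 := by
        rw [← mul_sub, mul_max_of_nonneg _ _ hl, mul_zero]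
      rw [this]; ring
    calc ∑ i, (max (l * f x - l * f (flipBit x i)) 0) ^ 2 * Real.exp (l * f x) / 4
        = (l ^ 2 * Real.exp (l * f x) / 4) * ∑ i, (max (f x - f (flipBit x i)) 0) ^ 2 := by
          rw [Finset.mul_sum]
          refine Finset.sum_congr rfl fun i _ => ?_
          rw [key i]; ring
      _ ≤ (l ^ 2 * Real.exp (l * f x) / 4) * v := by
          apply mul_le_mul_of_nonneg_left (hcond x) (by positivity)
      _ = (l ^ 2 * v / 4) * Real.exp (l * f x) := by ring
  rw [expecb_const_mul] at step4
  calc expecb (fun x => Real.exp (l * f x) * Real.log (Real.exp (l * f x)))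
      - expecb (fun x => Real.exp (l * f x)) * Real.log (expecb (fun x => Real.exp (l * f x)))
      ≤ _ := step1
    _ ≤ _ := step2
    _ = _ := step3
    _ ≤ 2 * ((l ^ 2 * v / 4) * expecb (fun x => Real.exp (l * f x))) := by linarith [step4]
    _ = (l ^ 2 * v / 2) * expecb (fun x => Real.exp (l * f x)) := by ring

/-- Herbst argument: sub-Gaussian mgf bound -/
lemma mgf_bound {n : ℕ} (f : (Fin n → Fin 2) → ℝ) (v : ℝ) (hv : 0 < v)
    (hcond : ∀ x, ∑ i, (max (f x - f (flipBit x i)) 0) ^ 2 ≤ v)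
    (l : ℝ) (hl : 0 ≤ l) :
    expecb (fun x => Real.exp (l * f x)) ≤ Real.exp (l * expecb f + v * l ^ 2 / 2) := by
  set M : ℝ → ℝ := fun t => expecb fun x => Real.exp (t * f x) with hM
  set D : ℝ → ℝ := fun t => expecb fun x => f x * Real.exp (t * f x) with hD
  have hMpos : ∀ t, 0 < M t := fun t => expecb_pos fun x => Real.exp_pos _
  have hMd : ∀ t, HasDerivAt M (D t) t := by
    intro t
    have : HasDerivAt (fun t => ∑ x : Fin n → Fin 2, Real.exp (t * f x))
        (∑ x : Fin n → Fin 2, f x * Real.exp (t * f x)) t := by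
      apply HasDerivAt.fun_sum
      intro x _
      have h1 : HasDerivAt (fun t : ℝ => t * f x) (f x) t := by
        simpa using (hasDerivAt_id t).mul_const (f x)
      simpa [mul_comm] using h1.exp
    have h2 := this.div_const ((2:ℝ) ^ n)
    have e1 : M = fun t => (∑ x : Fin n → Fin 2, Real.exp (t * f x)) / 2 ^ n := by
      funext t; rfl
    have e2 : D t = (∑ x : Fin n → Fin 2, f x * Real.exp (t * f x)) / 2 ^ n := rfl
    rw [e1, e2]
    exact h2
  have hM0 : M 0 = 1 := by
    have : (fun x : Fin n → Fin 2 => Real.exp (0 * f x)) = fun _ => (1:ℝ) := by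
      funext x; simp
    rw [hM]
    simp only [this]
    exact expecb_one
  have hD0 : D 0 = expecb f := by
    rw [hD]
    simp only [zero_mul, Real.exp_zero, mul_one]
  rcases eq_or_lt_of_le hl with hl0 | hlpos
  · rw [← hl0]
    have e : (fun x : Fin n → Fin 2 => Real.exp (0 * f x)) = fun _ => (1:ℝ) := by
      funext x; simp
    rw [e, expecb_one]
    simp
  -- entropy inequality in mgf form
  have entIneq : ∀ t, 0 ≤ t → t * D t - M t * Real.log (M t) ≤ (t ^ 2 * v / 2) * M t := by
    intro t ht
    have h1 := ent_exp_le f v hcond t ht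
    have h2 : expecb (fun x => Real.exp (t * f x) * Real.log (Real.exp (t * f x)))
        = t * D t := by
      rw [hD, ← expecb_const_mul]
      congr 1
      funext x
      rw [Real.log_exp]
      ring
    rw [h2] at h1
    exact h1
  -- the function U is antitone on (0, ∞)
  set U : ℝ → ℝ := fun t => Real.log (M t) / t - v / 2 * t with hU
  have hUderiv : ∀ t : ℝ, 0 < t →
      HasDerivAt U ((D t / M t * t - Real.log (M t)) / t ^ 2 - v / 2) t := by
    intro t ht
    have hpsi : HasDerivAt (fun t => Real.log (M t)) (D t / M t) t :=
      (hMd t).log (ne_of_gt (hMpos t))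
    have hdiv : HasDerivAt (fun t => Real.log (M t) / t)
        ((D t / M t * t - Real.log (M t) * 1) / t ^ 2) t :=
      hpsi.div (hasDerivAt_id t) (ne_of_gt ht)
    have hlin : HasDerivAt (fun t : ℝ => v / 2 * t) (v / 2) t := by
      simpa using (hasDerivAt_id t).const_mul (v / 2)
    simpa [mul_one] using hdiv.fun_sub hlin
  have hUanti : AntitoneOn U (Set.Ioi 0) := by
    apply antitoneOn_of_deriv_nonpos (convex_Ioi 0)
    · intro t ht
      exact ((hUderiv t ht).continuousAt).continuousWithinAt
    · rw [interior_Ioi]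
      intro t ht
      exact (hUderiv t ht).differentiableAt.differentiableWithinAt
    · rw [interior_Ioi]
      intro t ht
      rw [(hUderiv t ht).deriv]
      have hMt := hMpos t
      have htpos : (0:ℝ) < t := ht
      have ht2 : (0:ℝ) < t ^ 2 := by positivity
      have e1 : D t / M t * t - Real.log (M t) = (t * D t - M t * Real.log (M t)) / M t := by
        field_simp
      have Qle : (t * D t - M t * Real.log (M t)) / M t ≤ t ^ 2 * v / 2 := by
        rw [div_le_iff₀ hMt]
        exact entIneq t htpos.le
      have h3 : (t * D t - M t * Real.log (M t)) / M t / t ^ 2 ≤ (t ^ 2 * v / 2) / t ^ 2 := by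
        gcongr
      have h4 : (t ^ 2 * v / 2) / t ^ 2 = v / 2 := by
        field_simp
      rw [e1]
      rw [h4] at h3
      linarith
  -- limit of U at 0+
  have hlim : Filter.Tendsto (fun t => Real.log (M t) / t) (nhdsWithin 0 (Set.Ioi 0))
      (nhds (expecb f)) := by
    have hpsi0 : HasDerivAt (fun t => Real.log (M t)) (D 0 / M 0) 0 :=
      (hMd 0).log (ne_of_gt (hMpos 0))
    have h5 := hasDerivAt_iff_tendsto_slope.mp hpsi0
    have h6 : Filter.Tendsto (slope (fun t => Real.log (M t)) 0) (nhdsWithin 0 (Set.Ioi 0))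
        (nhds (D 0 / M 0)) := by
      apply h5.mono_left
      apply nhdsWithin_mono
      intro x hx
      exact ne_of_gt hx
    have h7 : ∀ t : ℝ, slope (fun t => Real.log (M t)) 0 t = Real.log (M t) / t := by
      intro t
      rw [slope_def_field]
      rw [hM0, Real.log_one]
      simp
    have h8 : (slope (fun t => Real.log (M t)) 0) = fun t => Real.log (M t) / t := funext h7
    rw [h8] at h6
    rw [hD0, hM0] at h6
    simpa using h6
  have hlimU : Filter.Tendsto U (nhdsWithin 0 (Set.Ioi 0)) (nhds (expecb f)) := by
    have hc : Filter.Tendsto (fun t : ℝ => v / 2 * t) (nhdsWithin 0 (Set.Ioi 0)) (nhds 0) := by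
      have : Filter.Tendsto (fun t : ℝ => v / 2 * t) (nhds 0) (nhds (v / 2 * 0)) :=
        (continuous_const.mul continuous_id).tendsto 0
      rw [mul_zero] at this
      exact this.mono_left nhdsWithin_le_nhds
    have := hlim.sub hc
    rw [sub_zero] at this
    exact this
  -- conclude U l ≤ expecb f
  have hUle : U l ≤ expecb f := by
    apply ge_of_tendsto hlimU
    filter_upwards [Ioc_mem_nhdsGT_of_mem (Set.left_mem_Ico.mpr hlpos)] with t ht
    exact hUanti ht.1 hlpos ht.2
  -- unfold
  have hfinal : Real.log (M l) ≤ l * expecb f + v * l ^ 2 / 2 := by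
    have : Real.log (M l) / l - v / 2 * l ≤ expecb f := hUle
    have h9 : Real.log (M l) / l ≤ expecb f + v / 2 * l := by linarith
    have h10 := (div_le_iff₀ hlpos).mp h9
    calc Real.log (M l) ≤ (expecb f + v / 2 * l) * l := h10
      _ = l * expecb f + v * l ^ 2 / 2 := by ring
  have := (Real.log_le_iff_le_exp (hMpos l)).mp hfinal
  exact this

lemma prb_nonneg {n : ℕ} (P : (Fin n → Fin 2) → Prop) : 0 ≤ prb P := by
  unfold prb; positivity

lemma prb_mono {n : ℕ} (f : (Fin n → Fin 2) → ℝ) {z₁ z₂ : ℝ} (h : z₁ ≤ z₂) :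
    prb (fun x => f x ≤ z₁) ≤ prb (fun x => f x ≤ z₂) := by
  unfold prb
  gcongr

lemma prb_spec {n : ℕ} (f : (Fin n → Fin 2) → ℝ) {α : ℝ} (h0 : 0 < α) (h1 : α ≤ 1) :
    α ≤ prb (fun x => f x ≤ quant f α) ∧
      ∀ z, α ≤ prb (fun x => f x ≤ z) → quant f α ≤ z := by
  have huniv : (Finset.univ : Finset (Fin n → Fin 2)).Nonempty := Finset.univ_nonempty
  have hTne : (Finset.image f Finset.univ).Nonempty := huniv.image f
  have hmax : α ≤ prb (fun x => f x ≤ (Finset.image f Finset.univ).max' hTne) := by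
    have he : Finset.univ.filter
        (fun x => f x ≤ (Finset.image f Finset.univ).max' hTne) = Finset.univ := by
      apply Finset.filter_true_of_mem
      intro x _
      exact Finset.le_max' _ (f x) (Finset.mem_image_of_mem f (Finset.mem_univ x))
    unfold prb
    rw [he, Finset.card_univ]
    have hc : (Fintype.card (Fin n → Fin 2) : ℝ) = 2 ^ n := by
      simp [Fintype.card_pi]
    rw [hc, div_self (by positivity)]
    exact h1
  have hTgne : ((Finset.image f Finset.univ).filter
      (fun t => α ≤ prb (fun x => f x ≤ t))).Nonempty :=
    ⟨(Finset.image f Finset.univ).max' hTne,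
      Finset.mem_filter.mpr ⟨(Finset.image f Finset.univ).max'_mem hTne, hmax⟩⟩
  obtain ⟨t₀, ht₀Tg, ht₀min⟩ : ∃ t₀ ∈ (Finset.image f Finset.univ).filter
      (fun t => α ≤ prb (fun x => f x ≤ t)),
      ∀ u ∈ (Finset.image f Finset.univ).filter (fun t => α ≤ prb (fun x => f x ≤ t)), t₀ ≤ u :=
    ⟨_, Finset.min'_mem _ hTgne, fun u hu => Finset.min'_le _ u hu⟩
  have ht₀mem : α ≤ prb (fun x => f x ≤ t₀) := (Finset.mem_filter.mp ht₀Tg).2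
  have hlb : ∀ z : ℝ, α ≤ prb (fun x => f x ≤ z) → t₀ ≤ z := by
    intro z hz
    have hfne : (Finset.univ.filter (fun x => f x ≤ z)).Nonempty := by
      by_contra hc
      rw [Finset.not_nonempty_iff_eq_empty] at hc
      rw [prb, hc] at hz
      simp at hz
      linarith
    have himne : (Finset.image f (Finset.univ.filter (fun x => f x ≤ z))).Nonempty := hfne.image f
    obtain ⟨x₀, hx₀mem, hx₀max⟩ : ∃ u ∈ Finset.image f (Finset.univ.filter (fun x => f x ≤ z)),
        ∀ w ∈ Finset.image f (Finset.univ.filter (fun x => f x ≤ z)), w ≤ u :=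
      ⟨_, Finset.max'_mem _ himne, fun w hw => Finset.le_max' _ w hw⟩
    obtain ⟨y, hy, hfy⟩ := Finset.mem_image.mp hx₀mem
    have huz : x₀ ≤ z := by
      rw [← hfy]
      exact (Finset.mem_filter.mp hy).2
    have hsub : Finset.univ.filter (fun x => f x ≤ z)
        ⊆ Finset.univ.filter (fun x => f x ≤ x₀) := by
      intro x hx
      rw [Finset.mem_filter]
      exact ⟨Finset.mem_univ x, hx₀max (f x) (Finset.mem_image_of_mem f hx)⟩
    have hprbu : α ≤ prb (fun x => f x ≤ x₀) := by
      refine le_trans hz ?_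
      unfold prb
      gcongr

    have huT : x₀ ∈ Finset.image f Finset.univ := by
      rw [Finset.mem_image]
      exact ⟨y, Finset.mem_univ y, hfy⟩
    exact le_trans (ht₀min x₀ (Finset.mem_filter.mpr ⟨huT, hprbu⟩)) huz
  have hq : quant f α = t₀ := by
    unfold quant
    apply le_antisymm
    · exact csInf_le ⟨t₀, fun z hz => hlb z hz⟩ ht₀mem
    · exact le_csInf ⟨t₀, ht₀mem⟩ fun z hz => hlb z hz
  rw [hq]
  exact ⟨ht₀mem, hlb⟩

lemma prb_compl {n : ℕ} (P : (Fin n → Fin 2) → Prop) :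
    prb P + prb (fun x => ¬ P x) = 1 := by
  unfold prb
  rw [← add_div, div_eq_one_iff_eq (by positivity), ← Nat.cast_add,
    Finset.card_filter_add_card_filter_not, Finset.card_univ]
  simp [Fintype.card_pi]

lemma prb_chernoff {n : ℕ} (f : (Fin n → Fin 2) → ℝ) (R l : ℝ) (hl : 0 ≤ l) :
    prb (fun x => R < f x) ≤ expecb (fun x => Real.exp (l * f x)) * Real.exp (-(l * R)) := by
  have key : ((Finset.univ.filter (fun x => R < f x)).card : ℝ)
      ≤ ∑ x : Fin n → Fin 2, Real.exp (l * f x) * Real.exp (-(l * R)) := by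
    calc ((Finset.univ.filter (fun x => R < f x)).card : ℝ)
        = ∑ _x ∈ Finset.univ.filter (fun x => R < f x), (1:ℝ) := by
          rw [Finset.sum_const]; simp
      _ ≤ ∑ x ∈ Finset.univ.filter (fun x => R < f x),
            Real.exp (l * f x) * Real.exp (-(l * R)) := by
          apply Finset.sum_le_sum
          intro x hx
          rw [Finset.mem_filter] at hx
          rw [← Real.exp_add]
          rw [show (1:ℝ) = Real.exp 0 from (Real.exp_zero).symm]
          apply Real.exp_le_exp.mpr
          have h2 : 0 ≤ l * (f x - R) := mul_nonneg hl (by linarith [hx.2])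
          nlinarith
      _ ≤ ∑ x : Fin n → Fin 2, Real.exp (l * f x) * Real.exp (-(l * R)) := by
          apply Finset.sum_le_sum_of_subset_of_nonneg (Finset.filter_subset _ _)
          intro x _ _
          positivity
  unfold prb expecb
  rw [div_mul_eq_mul_div, Finset.sum_mul]
  gcongr


lemma expecb_nonneg {n : ℕ} {h : (Fin n → Fin 2) → ℝ} (H : ∀ x, 0 ≤ h x) : 0 ≤ expecb h := by
  unfold expecb
  apply div_nonneg (Finset.sum_nonneg fun x _ => H x) (by positivity)

lemma expecb_const {n : ℕ} (c : ℝ) : expecb (fun _ : Fin n → Fin 2 => c) = c := by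
  have h : (fun _ : Fin n → Fin 2 => c) = fun _ : Fin n → Fin 2 => c * 1 := by
    funext x; ring
  rw [h, expecb_const_mul, expecb_one, mul_one]

lemma mean_le_median {n : ℕ} (f : (Fin n → Fin 2) → ℝ) (v : ℝ) (hv : 0 < v)
    (hcond : ∀ x, ∑ i, (max (f x - f (flipBit x i)) 0) ^ 2 ≤ v) :
    expecb f ≤ quant f (1/2) + 3 * Real.sqrt v := by
  set μ : ℝ := expecb f with hμ
  set l : ℝ := Real.sqrt (2 / v) with hldef
  have hlpos : 0 < l := Real.sqrt_pos.mpr (by positivity)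
  have hl2 : l ^ 2 = 2 / v := Real.sq_sqrt (by positivity)
  set Q : ℝ := expecb (fun x => (max (f x - μ) 0) ^ 2) with hQ
  have hQnonneg : 0 ≤ Q := expecb_nonneg fun x => by positivity
  have hcenter : expecb (fun x => f x - μ) = 0 := by
    have h : (fun x => f x - μ) = fun x => f x + (-μ) := by funext x; ring
    rw [h, expecb_add]
    rw [show (fun _ : Fin n → Fin 2 => -μ) = fun _ : Fin n → Fin 2 => (-μ) from rfl, expecb_const]
    rw [← hμ]; ring
  -- pointwise exponential bound
  have hpt : ∀ x, 1 + l * (f x - μ) + (l ^ 2 / 2) * (max (f x - μ) 0) ^ 2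
      ≤ Real.exp (l * (f x - μ)) := by
    intro x
    rcases le_or_gt 0 (f x - μ) with hpos | hneg
    · rw [max_eq_left hpos]
      have ht : 0 ≤ l * (f x - μ) := mul_nonneg hlpos.le hpos
      have hexp := Real.sum_le_exp_of_nonneg ht 3
      have he : ∑ i ∈ Finset.range 3, (l * (f x - μ)) ^ i / (i.factorial : ℝ)
          = 1 + l * (f x - μ) + (l * (f x - μ)) ^ 2 / 2 := by
        rw [Finset.sum_range_succ, Finset.sum_range_succ, Finset.sum_range_one]
        norm_num [Nat.factorial]
      rw [he] at hexp
      calc 1 + l * (f x - μ) + (l ^ 2 / 2) * (f x - μ) ^ 2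
          = 1 + l * (f x - μ) + (l * (f x - μ)) ^ 2 / 2 := by ring
        _ ≤ _ := hexp
    · rw [max_eq_right hneg.le]
      have h1 := Real.add_one_le_exp (l * (f x - μ))
      have h2 : (l ^ 2 / 2) * (0:ℝ) ^ 2 = 0 := by ring
      linarith [h1, h2.le]
  have hsum : expecb (fun x => 1 + l * (f x - μ) + (l ^ 2 / 2) * (max (f x - μ) 0) ^ 2)
      ≤ expecb (fun x => Real.exp (l * (f x - μ))) := expecb_mono hpt
  -- expand LHS
  have hexpand : expecb (fun x => 1 + l * (f x - μ) + (l ^ 2 / 2) * (max (f x - μ) 0) ^ 2)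
      = 1 + (l ^ 2 / 2) * Q := by
    have h : (fun x => 1 + l * (f x - μ) + (l ^ 2 / 2) * (max (f x - μ) 0) ^ 2)
        = fun x => (1 + l * (f x - μ)) + (l ^ 2 / 2) * (max (f x - μ) 0) ^ 2 := rfl
    rw [h, expecb_add, expecb_add, expecb_const, expecb_const_mul, expecb_const_mul,
      hcenter, ← hQ]
    ring
  -- bound RHS
  have hRHS : expecb (fun x => Real.exp (l * (f x - μ))) ≤ Real.exp 1 := by
    have h : (fun x => Real.exp (l * (f x - μ)))
        = fun x => Real.exp (l * f x) * Real.exp (-(l * μ)) := by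
      funext x
      rw [← Real.exp_add]
      congr 1
      ring
    rw [h, expecb_mul_const]
    have hmgf := mgf_bound f v hv hcond l hlpos.le
    calc expecb (fun x => Real.exp (l * f x)) * Real.exp (-(l * μ))
        ≤ Real.exp (l * expecb f + v * l ^ 2 / 2) * Real.exp (-(l * μ)) := by
          gcongr
      _ = Real.exp (v * l ^ 2 / 2) := by
          rw [← Real.exp_add, ← hμ]
          congr 1
          ring
      _ = Real.exp 1 := by
          congr 1
          rw [hl2]
          field_simp
  -- conclude Q ≤ 2v
  have hQle : Q ≤ 2 * v := by
    have h1 : 1 + (l ^ 2 / 2) * Q ≤ Real.exp 1 := by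
      rw [← hexpand]
      exact le_trans hsum hRHS
    have h2 : Real.exp 1 < 2.7182818286 := Real.exp_one_lt_d9
    have h3 : l ^ 2 / 2 = 1 / v := by rw [hl2]; ring
    rw [h3] at h1
    have h1' : v * (1 + 1 / v * Q) ≤ v * Real.exp 1 := mul_le_mul_of_nonneg_left h1 hv.le
    have h1'' : v * (1 + 1 / v * Q) = v + Q := by field_simp
    rw [h1''] at h1'
    nlinarith [hv]
  -- Cauchy-Schwarz
  set Ep : ℝ := expecb (fun x => max (f x - μ) 0) with hEp
  have hEpnn : 0 ≤ Ep := expecb_nonneg fun x => le_max_right _ _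
  have hCS : Ep ^ 2 ≤ Q := by
    have hcs := Finset.sum_mul_sq_le_sq_mul_sq Finset.univ
      (fun x : Fin n → Fin 2 => max (f x - μ) 0) (fun _ => (1:ℝ))
    simp only [mul_one, one_pow] at hcs
    rw [Finset.sum_const, Finset.card_univ] at hcs
    have hcard : (Fintype.card (Fin n → Fin 2) : ℝ) = 2 ^ n := by simp [Fintype.card_pi]
    rw [hEp, hQ]
    unfold expecb
    rw [div_pow, div_le_div_iff₀ (by positivity) (by positivity)]
    have : (Fintype.card (Fin n → Fin 2)) • (1:ℝ) = (2:ℝ) ^ n := by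
      rw [nsmul_eq_mul, hcard, mul_one]
    rw [this] at hcs
    nlinarith [hcs]
  have hEple : 2 * Ep ≤ 3 * Real.sqrt v := by
    have h9 : Real.sqrt (9 * v) = 3 * Real.sqrt v := by
      rw [show (9:ℝ) * v = 3 ^ 2 * v by ring, Real.sqrt_mul (by positivity),
        Real.sqrt_sq (by norm_num)]
    rw [← h9]
    rw [Real.le_sqrt (by linarith) (by positivity)]
    nlinarith [hCS, hQle, hEpnn]
  -- negative part equals positive part
  have hEneg : expecb (fun x => max (μ - f x) 0) = Ep := by
    have hpt2 : (fun x => max (μ - f x) 0)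
        = fun x => max (f x - μ) 0 + (-1) * (f x - μ) := by
      funext x
      rcases le_total (f x) μ with hc | hc
      · rw [max_eq_left (by linarith), max_eq_right (by linarith)]
        ring
      · rw [max_eq_right (by linarith), max_eq_left (by linarith)]
        ring
    rw [hpt2, expecb_add, expecb_const_mul, hcenter, hEp]
    ring
  -- median comparison
  obtain ⟨hmed, -⟩ := prb_spec f (by norm_num : (0:ℝ) < 1/2) (by norm_num : (1:ℝ)/2 ≤ 1)
  rcases le_or_gt μ (quant f (1/2)) with hc | hc
  · have : 0 ≤ 3 * Real.sqrt v := by positivity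
    linarith
  · -- expecb of negative part is at least (μ - q)/2
    set q : ℝ := quant f (1/2) with hq
    have hlower : (μ - q) / 2 ≤ expecb (fun x => max (μ - f x) 0) := by
      have hsum1 : ∑ x ∈ Finset.univ.filter (fun x => f x ≤ q), (μ - q)
          ≤ ∑ x ∈ Finset.univ.filter (fun x => f x ≤ q), max (μ - f x) 0 := by
        apply Finset.sum_le_sum
        intro x hx
        have hfx := (Finset.mem_filter.mp hx).2
        have : μ - q ≤ μ - f x := by linarith
        exact le_trans this (le_max_left _ _)
      have hsum2 : ∑ x ∈ Finset.univ.filter (fun x => f x ≤ q), max (μ - f x) 0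
          ≤ ∑ x : Fin n → Fin 2, max (μ - f x) 0 := by
        apply Finset.sum_le_sum_of_subset_of_nonneg (Finset.filter_subset _ _)
        intro x _ _
        exact le_max_right _ _
      have hsum3 : ((Finset.univ.filter (fun x => f x ≤ q)).card : ℝ) * (μ - q)
          ≤ ∑ x : Fin n → Fin 2, max (μ - f x) 0 := by
        calc ((Finset.univ.filter (fun x => f x ≤ q)).card : ℝ) * (μ - q)
            = ∑ x ∈ Finset.univ.filter (fun x => f x ≤ q), (μ - q) := by
              rw [Finset.sum_const, nsmul_eq_mul]
          _ ≤ _ := le_trans hsum1 hsum2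
      have hcardge : (1:ℝ)/2 ≤ ((Finset.univ.filter (fun x => f x ≤ q)).card : ℝ) / 2 ^ n :=
        hmed
      unfold expecb
      calc (μ - q) / 2 = (μ - q) * (1/2) := by ring
        _ ≤ (μ - q) * (((Finset.univ.filter (fun x => f x ≤ q)).card : ℝ) / 2 ^ n) :=
            mul_le_mul_of_nonneg_left hcardge (by linarith)
        _ = (((Finset.univ.filter (fun x => f x ≤ q)).card : ℝ) * (μ - q)) / 2 ^ n := by ring
        _ ≤ (∑ x : Fin n → Fin 2, max (μ - f x) 0) / 2 ^ n := by
            gcongr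
    rw [hEneg] at hlower
    linarith [hEple, hlower]

theorem stmt_3 {n : ℕ} (f : (Fin n → Fin 2) → ℝ) (v : ℝ) (hv : 0 < v)
    (hcond : ∀ x, ∑ i, (max (f x - f (flipBit x i)) 0) ^ 2 ≤ v)
    (a : ℕ → ℝ) (ha : ∀ k, a k = quant f (1 - (1 / 2) ^ k))
    (m : ℕ) (hm : 1 ≤ m) :
    a m ≤ a 1 + 8 * Real.sqrt (v * ((m : ℝ) - 1)) := by
  rcases eq_or_lt_of_le hm with h1 | h2
  · rw [← h1]
    have : v * ((1:ℕ) - 1 : ℝ) = 0 := by norm_num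
    rw [this, Real.sqrt_zero]
    norm_num
  · have hm2 : 2 ≤ m := h2
    have hmR : (2:ℝ) ≤ (m:ℝ) := by exact_mod_cast hm2
    have hm1R : (1:ℝ) ≤ (m:ℝ) - 1 := by linarith
    have hq1 : a 1 = quant f (1/2) := by rw [ha 1]; norm_num
    have hmean : expecb f ≤ a 1 + 3 * Real.sqrt v := by
      rw [hq1]; exact mean_le_median f v hv hcond
    set μ : ℝ := expecb f with hμ
    set s : ℝ := Real.sqrt (v * ((m:ℝ) - 1)) with hs
    have hsnn : 0 ≤ s := Real.sqrt_nonneg _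
    have hsv : Real.sqrt v ≤ s := Real.sqrt_le_sqrt (by nlinarith)
    set R : ℝ := a 1 + 8 * s with hR
    set l : ℝ := 4 * Real.sqrt (((m:ℝ) - 1) / v) with hl
    have hlnn : 0 ≤ l := by positivity
    have hls : l * s = 4 * ((m:ℝ) - 1) := by
      have key : Real.sqrt (((m:ℝ) - 1) / v) * Real.sqrt (v * ((m:ℝ) - 1)) = (m:ℝ) - 1 := by
        rw [← Real.sqrt_mul (by positivity)]
        rw [show ((m:ℝ) - 1) / v * (v * ((m:ℝ) - 1)) = ((m:ℝ) - 1) ^ 2 by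
          field_simp]
        exact Real.sqrt_sq (by linarith)
      rw [hl, hs, mul_assoc, key]
    have hl2 : l ^ 2 = 16 * ((m:ℝ) - 1) / v := by
      rw [hl, mul_pow, Real.sq_sqrt (by positivity)]
      ring
    have hcher := prb_chernoff f R l hlnn
    have hmgf := mgf_bound f v hv hcond l hlnn
    have hexp : expecb (fun x => Real.exp (l * f x)) * Real.exp (-(l * R))
        ≤ Real.exp (l * μ + v * l ^ 2 / 2 - l * R) := by
      rw [show l * μ + v * l ^ 2 / 2 - l * R = (l * μ + v * l ^ 2 / 2) + (-(l * R)) by ring,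
        Real.exp_add]
      exact mul_le_mul_of_nonneg_right hmgf (Real.exp_pos _).le
    have hexpbound : l * μ + v * l ^ 2 / 2 - l * R ≤ -(12 * ((m:ℝ) - 1)) := by
      have e1 : v * l ^ 2 / 2 = 8 * ((m:ℝ) - 1) := by
        rw [hl2]
        field_simp
        ring
      have e2 : μ - R ≤ -(5 * s) := by
        have h3 : μ - R ≤ 3 * Real.sqrt v - 8 * s := by
          rw [hR]
          linarith [hmean]
        linarith [hsv]
      have e3 : l * (μ - R) ≤ l * (-(5 * s)) := mul_le_mul_of_nonneg_left e2 hlnn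
      have e4 : l * (-(5 * s)) = -(20 * ((m:ℝ) - 1)) := by
        rw [show l * (-(5 * s)) = -(5 * (l * s)) by ring, hls]
        ring
      rw [e4] at e3
      calc l * μ + v * l ^ 2 / 2 - l * R = l * (μ - R) + v * l ^ 2 / 2 := by ring
        _ ≤ -(20 * ((m:ℝ) - 1)) + 8 * ((m:ℝ) - 1) := by rw [e1] at *; linarith
        _ = -(12 * ((m:ℝ) - 1)) := by ring
    have htail : prb (fun x => R < f x) ≤ (1/2 : ℝ) ^ m := by
      calc prb (fun x => R < f x)
          ≤ expecb (fun x => Real.exp (l * f x)) * Real.exp (-(l * R)) := hcher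
        _ ≤ Real.exp (l * μ + v * l ^ 2 / 2 - l * R) := hexp
        _ ≤ Real.exp (-(12 * ((m:ℝ) - 1))) := Real.exp_le_exp.mpr hexpbound
        _ ≤ (1/2 : ℝ) ^ m := by
            rw [show ((1:ℝ)/2) ^ m = Real.exp (Real.log (((1:ℝ)/2) ^ m)) from
              (Real.exp_log (by positivity)).symm]
            apply Real.exp_le_exp.mpr
            rw [Real.log_pow, one_div, Real.log_inv]
            have h2l : Real.log 2 < 0.6931471808 := Real.log_two_lt_d9
            have h2p : 0 < Real.log 2 := Real.log_pos (by norm_num)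
            nlinarith [hmR, h2l, h2p, mul_le_mul_of_nonneg_left h2l.le (by linarith : (0:ℝ) ≤ (m:ℝ))]
    have hα0 : (0:ℝ) < 1 - (1/2 : ℝ) ^ m := by
      have hlt : (1/2 : ℝ) ^ m < 1 := pow_lt_one₀ (by norm_num) (by norm_num) (by omega)
      linarith
    have hα1 : 1 - (1/2 : ℝ) ^ m ≤ 1 := by
      have : (0:ℝ) ≤ (1/2 : ℝ) ^ m := by positivity
      linarith
    obtain ⟨-, hle⟩ := prb_spec f hα0 hα1
    have heq : (fun x : Fin n → Fin 2 => ¬ (f x ≤ R)) = fun x => R < f x :=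
      funext fun x => propext not_le
    have hcompl := prb_compl (fun x : Fin n → Fin 2 => f x ≤ R)
    rw [heq] at hcompl
    have hprbR : 1 - (1/2 : ℝ) ^ m ≤ prb (fun x => f x ≤ R) := by
      linarith [htail, hcompl]
    have hfinal := hle R hprbR
    rw [ha m]
    exact hfinal
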